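/- Let γ, Δ, ε > 0, ξ ∈ (0, 0.4], and let (n_i) be an increasing sequence with n_{i+1} ≤ (1+ξ)n_i. Suppose N is an index such that for all i with n_i ≥ N, we have P(T > n_i) ≤ exp(-γ n_i Δ²/4), where T is a stopping time taking values in {n_i} with T ≥ n_1 and exp(-γ(N+1)Δ²/4) ≤ ε·exp(-γΔ²/4). Then E(T) ≤ (1+ξ)(N + 4ε/(γΔ²)). -/

import Mathlib

open MeasureTheory

/-- Expected stopping time bound for the sequential test without indifference region. -/
theorem stmt8 {Ω' : Type*} [MeasurableSpace Ω'] (ℙ : Measure Ω') [IsProbabilityMeasure ℙ]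
    (γ Δ ε ξ : ℝ) (hγ : 0 < γ) (hΔ : 0 < Δ) (hε : 0 < ε) (hξ : 0 < ξ) (hξ' : ξ ≤ 0.4)
    (n : ℕ → ℝ) (hpos : ∀ i, 0 < n i) (hmono : StrictMono n)
    (hgrow : ∀ i, n (i + 1) ≤ (1 + ξ) * n i)
    (N : ℝ) (T : Ω' → ℝ)
    (hTval : ∀ ω, ∃ i, T ω = n i) (hT1 : ∀ ω, n 1 ≤ T ω)
    (htail : ∀ i, N ≤ n i →
      (ℙ {ω | T ω > n i}).toReal ≤ Real.exp (-(γ * n i * Δ ^ 2 / 4)))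
    (hN : Real.exp (-(γ * (N + 1) * Δ ^ 2 / 4)) ≤ ε * Real.exp (-(γ * Δ ^ 2 / 4))) :
    ∫ ω, T ω ∂ℙ ≤ (1 + ξ) * (N + 4 * ε / (γ * Δ ^ 2)) := by
  obtain ⟨c, hc⟩ : ∃ x : ℝ, x = γ * Δ ^ 2 / 4 := ⟨_, rfl⟩
  have hcpos : 0 < c := by rw [hc]; positivity
  have hξ1 : (0:ℝ) < 1 + ξ := by linarith
  have htail' : ∀ i, N ≤ n i →
      (ℙ {ω | T ω > n i}).toReal ≤ Real.exp (-(c * n i)) := by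
    intro i hi
    have : -(c * n i) = -(γ * n i * Δ ^ 2 / 4) := by rw [hc]; ring
    rw [this]
    exact htail i hi
  -- exp(-(c*N)) ≤ ε
  have hεN : Real.exp (-(c * N)) ≤ ε := by
    have h1 : Real.exp (-(γ * (N + 1) * Δ ^ 2 / 4))
        = Real.exp (-(c * N)) * Real.exp (-(γ * Δ ^ 2 / 4)) := by
      rw [← Real.exp_add, hc]; ring_nf
    rw [h1] at hN
    exact le_of_mul_le_mul_right hN (Real.exp_pos _)
  -- n 0 < N
  have hNn0 : n 0 < N := by
    by_contra hcon
    push_neg at hcon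
    have h0 := htail' 0 hcon
    have huniv : {ω | T ω > n 0} = Set.univ := by
      ext ω
      simp only [Set.mem_setOf_eq, Set.mem_univ, iff_true]
      exact lt_of_lt_of_le (hmono (by norm_num : (0:ℕ) < 1)) (hT1 ω)
    rw [huniv, measure_univ] at h0
    simp only [ENNReal.toReal_one] at h0
    have h2 : Real.exp (-(c * n 0)) < 1 := by
      rw [Real.exp_lt_one_iff]
      have := hpos 0
      nlinarith
    linarith
  have hN0 : 0 < N := (hpos 0).trans hNn0
  have hRHSpos : (0:ℝ) < (1 + ξ) * (N + 4 * ε / (γ * Δ ^ 2)) := by positivity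
  by_cases hint : Integrable T ℙ
  · -- layer cake
    have hTnn : 0 ≤ᵐ[ℙ] T := Filter.Eventually.of_forall
      (fun ω => le_trans (hpos 1).le (hT1 ω))
    rw [hint.integral_eq_integral_meas_lt hTnn]
    obtain ⟨A, hA⟩ : ∃ x : ℝ, x = (1 + ξ) * N := ⟨_, rfl⟩
    have hApos : 0 < A := by rw [hA]; positivity
    obtain ⟨b, hb⟩ : ∃ x : ℝ, x = c / (1 + ξ) := ⟨_, rfl⟩
    have hbpos : 0 < b := by rw [hb]; positivity
    obtain ⟨g, hg⟩ : ∃ g : ℝ → ℝ, g = fun t => (ℙ {a | t < T a}).toReal := ⟨_, rfl⟩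
    obtain ⟨h, hh⟩ : ∃ h : ℝ → ℝ,
        h = fun t => if t ≤ A then 1 else Real.exp (-(b * t)) := ⟨_, rfl⟩
    rw [show (∫ t in Set.Ioi (0:ℝ), ℙ.real {a | t < T a})
        = ∫ t in Set.Ioi (0:ℝ), g t by subst hg; rfl]
    -- pointwise bound
    have key : ∀ t ∈ Set.Ioi (0:ℝ), g t ≤ h t := by
      intro t ht
      simp only [hg, hh]
      by_cases htA : t ≤ A
      · rw [if_pos htA]
        exact ENNReal.toReal_le_of_le_ofReal zero_le_one
          (by simpa using prob_le_one)
      · rw [if_neg htA]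
        push_neg at htA
        by_cases hex : ∃ j, t < n j
        · rcases Nat.lt_or_ge (Nat.find hex) 1 with hk0 | hk1
          · exfalso
            have h0 : t < n 0 := by
              have hs := Nat.find_spec hex
              have hz : Nat.find hex = 0 := by omega
              rwa [hz] at hs
            have hNA : N < A := by rw [hA]; nlinarith
            linarith
          · obtain ⟨m, hm⟩ : ∃ m, Nat.find hex = m + 1 :=
              ⟨Nat.find hex - 1, by omega⟩
            have hmle : n m ≤ t := by
              have := Nat.find_min hex (by omega : m < Nat.find hex)
              push_neg at this; exact this
            have hm1 : t < n (m + 1) := by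
              have := Nat.find_spec hex
              rwa [hm] at this
            have hgrm := hgrow m
            have hnmgt : t / (1 + ξ) < n m := by
              rw [div_lt_iff₀ hξ1]
              nlinarith
            have hNnm : N ≤ n m := by
              have : N < t / (1 + ξ) := by
                rw [lt_div_iff₀ hξ1]
                nlinarith [hA]
              linarith
            have hsub : {a | t < T a} ⊆ {ω | T ω > n m} :=
              fun a ha => lt_of_le_of_lt hmle ha
            calc (ℙ {a | t < T a}).toReal
                ≤ (ℙ {ω | T ω > n m}).toReal :=
                  ENNReal.toReal_mono (measure_ne_top _ _) (measure_mono hsub)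
              _ ≤ Real.exp (-(c * n m)) := htail' m hNnm
              _ ≤ Real.exp (-(b * t)) := by
                  apply Real.exp_le_exp.mpr
                  have hbt : b * t ≤ c * n m := by
                    rw [hb, div_mul_eq_mul_div, div_le_iff₀ hξ1]
                    nlinarith
                  linarith
        · push_neg at hex
          have hempty : {a | t < T a} = ∅ := by
            ext a
            simp only [Set.mem_setOf_eq, Set.mem_empty_iff_false, iff_false, not_lt]
            obtain ⟨j, hj⟩ := hTval a
            rw [hj]; exact hex j
          rw [hempty]
          simp [Real.exp_nonneg]
    -- integrability of h on Ioi 0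
    have hsplit : Set.Ioc (0:ℝ) A ∪ Set.Ioi A = Set.Ioi 0 :=
      Set.Ioc_union_Ioi_eq_Ioi hApos.le
    have hh1 : IntegrableOn h (Set.Ioc 0 A) := by
      have hconst : IntegrableOn (fun _ : ℝ => (1:ℝ)) (Set.Ioc 0 A) :=
        (integrableOn_const_iff).mpr (Or.inr (by
          rw [Real.volume_Ioc]; exact ENNReal.ofReal_lt_top))
      apply hconst.congr_fun ?_ measurableSet_Ioc
      intro x hx
      simp only [hh]
      rw [if_pos hx.2]
    have hh2 : IntegrableOn h (Set.Ioi A) := by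
      apply (exp_neg_integrableOn_Ioi A hbpos).congr_fun ?_ measurableSet_Ioi
      intro x hx
      simp only [hh, neg_mul]
      rw [if_neg (not_le.mpr hx)]
    have hhint : IntegrableOn h (Set.Ioi 0) := by
      rw [← hsplit]; exact hh1.union hh2
    -- integrability of g on Ioi 0
    have hganti : Antitone g := by
      intro s t hst
      rw [hg]
      exact ENNReal.toReal_mono (measure_ne_top _ _)
        (measure_mono (fun a ha => lt_of_le_of_lt hst ha))
    have hgmeas : Measurable g := hganti.measurable
    have hgnn : ∀ t, 0 ≤ g t := fun t => by rw [hg]; exact ENNReal.toReal_nonneg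
    have hhnn : ∀ t, 0 ≤ h t := by
      intro t
      rw [hh]
      dsimp only
      split
      · norm_num
      · exact (Real.exp_pos _).le
    have hgint : IntegrableOn g (Set.Ioi 0) := by
      apply MeasureTheory.Integrable.mono hhint hgmeas.aestronglyMeasurable.restrict
      filter_upwards [ae_restrict_mem measurableSet_Ioi] with t ht
      rw [Real.norm_eq_abs, Real.norm_eq_abs, abs_of_nonneg (hgnn t),
        abs_of_nonneg (hhnn t)]
      exact key t ht
    -- compare
    have hcompare : ∫ t in Set.Ioi (0:ℝ), g t ≤ ∫ t in Set.Ioi (0:ℝ), h t :=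
      setIntegral_mono_on hgint hhint measurableSet_Ioi key
    -- compute ∫ h
    have hval1 : ∫ t in Set.Ioc (0:ℝ) A, h t = A := by
      rw [setIntegral_congr_fun measurableSet_Ioc
        (g := fun _ => (1:ℝ)) (fun x hx => by simp only [hh]; rw [if_pos hx.2])]
      simp [Real.volume_Ioc, ENNReal.toReal_ofReal hApos.le, hApos.le]
    have hval2 : ∫ t in Set.Ioi A, h t = b⁻¹ * Real.exp (-(c * N)) := by
      rw [setIntegral_congr_fun measurableSet_Ioi
        (g := fun t => Real.exp (-(b * t)))
        (fun x hx => by simp only [hh]; rw [if_neg (not_le.mpr hx)])]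
      have hcm := integral_comp_mul_left_Ioi (fun y => Real.exp (-y)) A hbpos
      simp only [smul_eq_mul] at hcm
      rw [hcm, integral_exp_neg_Ioi]
      congr 2
      rw [hb, hA]
      field_simp
    have hvalh : ∫ t in Set.Ioi (0:ℝ), h t = A + b⁻¹ * Real.exp (-(c * N)) := by
      rw [← hsplit, setIntegral_union (Set.Ioc_disjoint_Ioi le_rfl)
        measurableSet_Ioi hh1 hh2, hval1, hval2]
    -- final arithmetic
    have hbinv : b⁻¹ = (1 + ξ) / c := by
      rw [hb]
      field_simp
    calc ∫ t in Set.Ioi (0:ℝ), g t ≤ ∫ t in Set.Ioi (0:ℝ), h t := hcompare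
      _ = A + b⁻¹ * Real.exp (-(c * N)) := hvalh
      _ ≤ A + b⁻¹ * ε := by
          have : b⁻¹ * Real.exp (-(c * N)) ≤ b⁻¹ * ε :=
            mul_le_mul_of_nonneg_left hεN (inv_pos.mpr hbpos).le
          linarith
      _ = (1 + ξ) * (N + 4 * ε / (γ * Δ ^ 2)) := by
          rw [hbinv, hA, hc]
          field_simp
  · rw [integral_undef hint]
    exact hRHSpos.le
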